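/- Let D ⊆ H ⊆ R be integral domains such that R is a proper overring of D (D ⊊ R and R is contained in the quotient field of D) and H is integrally closed, and let n be a positive integer. If H is a directed union of overrings A_α of D such that each A_α is an essentially n-valuated subring of R, then H is an essentially n-valuated subring of R. -/

import Mathlib

namespace ArticleOT

variable {K : Type*} [Field K]


/-- The localization of `R` at the multiplicative set `A \ P`, as a subset of the field `K`. -/
def locSet (A : Subring K) (P : Ideal A) (R : Subring K) : Set K :=
  {x : K | ∃ r ∈ R, ∃ s : A, s ∉ P ∧ x * (s : K) = r}

/-- The localization `A_P` of a subring `A` of `K` at a prime ideal `P`, as a subring of `K`. -/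
def locSubring (A : Subring K) (P : Ideal A) (hP : P.IsPrime) : Subring K where
  carrier := locSet A P A
  zero_mem' := ⟨0, zero_mem A, 1, fun h => hP.ne_top ((Ideal.eq_top_iff_one P).2 h), by simp⟩
  one_mem' := ⟨1, one_mem A, 1, fun h => hP.ne_top ((Ideal.eq_top_iff_one P).2 h), by simp⟩
  add_mem' := by
    rintro x y ⟨r₁, hr₁, s₁, hs₁, e₁⟩ ⟨r₂, hr₂, s₂, hs₂, e₂⟩
    refine ⟨r₁ * (s₂ : K) + r₂ * (s₁ : K),
      add_mem (mul_mem hr₁ s₂.2) (mul_mem hr₂ s₁.2), s₁ * s₂,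
      fun h => ((hP.mem_or_mem h).elim hs₁ hs₂), ?_⟩
    push_cast
    calc (x + y) * ((s₁ : K) * (s₂ : K)) = (x * s₁) * s₂ + (y * s₂) * s₁ := by ring
    _ = r₁ * s₂ + r₂ * s₁ := by rw [e₁, e₂]
  mul_mem' := by
    rintro x y ⟨r₁, hr₁, s₁, hs₁, e₁⟩ ⟨r₂, hr₂, s₂, hs₂, e₂⟩
    refine ⟨r₁ * r₂, mul_mem hr₁ hr₂, s₁ * s₂,
      fun h => ((hP.mem_or_mem h).elim hs₁ hs₂), ?_⟩
    push_cast
    calc (x * y) * ((s₁ : K) * (s₂ : K)) = (x * s₁) * (y * s₂) := by ring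
    _ = r₁ * r₂ := by rw [e₁, e₂]
  neg_mem' := by
    rintro x ⟨r, hr, s, hs, e⟩
    exact ⟨-r, neg_mem hr, s, hs, by rw [neg_mul, e]⟩

lemma mem_locSubring {A : Subring K} {P : Ideal A} {hP : P.IsPrime} {x : K} :
    x ∈ locSubring A P hP ↔ x ∈ locSet A P A := Iff.rfl

/-- The integral closure of a subring `H` of `K` in `K`, as a subring of `K`.  When `K` is the
quotient field of `H` this is the integral closure `H̄` of `H`. -/
noncomputable def intClosure (H : Subring K) : Subring K := (integralClosure H K).toSubring

lemma mem_intClosure_of_mem {H : Subring K} {x : K} (hx : x ∈ H) : x ∈ intClosure H := by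
  have : IsIntegral (↥H) x := by
    refine ⟨Polynomial.X - Polynomial.C ⟨x, hx⟩, Polynomial.monic_X_sub_C _, ?_⟩
    simp only [Polynomial.eval₂_sub, Polynomial.eval₂_X, Polynomial.eval₂_C]
    exact sub_eq_zero_of_eq rfl
  exact this

/-- `H` is an essentially `n`-valuated subring of `R` (both subrings of the field `K`, which is
the common quotient field): for each prime ideal `P` of the integral closure `H̄` of `H` there
are `n` (not necessarily distinct) valuation overrings `V i` of `H` with
`H̄_P = V 1 ∩ ⋯ ∩ V n ∩ R_P`. -/
noncomputable def EssNVal (H R : Subring K) (n : ℕ) : Prop :=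
  ∀ P : Ideal (intClosure H), P.IsPrime →
    ∃ V : Fin n → Subring K,
      (∀ i, H ≤ V i ∧ ValuationRing (V i)) ∧
      locSet (intClosure H) P (intClosure H) =
        (⋂ i, (V i : Set K)) ∩ locSet (intClosure H) P R

/-- A prime ideal of height one: a nonzero prime all of whose strictly smaller primes are zero
(in a domain this says precisely that the height is one). -/
def HeightOne {A : Type*} [CommRing A] (Q : Ideal A) : Prop :=
  Q.IsPrime ∧ Q ≠ ⊥ ∧ ∀ Q' : Ideal A, Q'.IsPrime → Q' < Q → Q' = ⊥

/-- `V` is a hidden prime divisor of the local domain `D` (mapped into the field `K`, its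
quotient field, by `φ`): `V` is a DVR overring of `D` that dominates `D` (every nonunit of `D`
maps to a nonunit of `V`, i.e. `m_D ⊆ m_V`) and whose residue field `V/m_V` (here `m_V` is the
Jacobson radical, which is the maximal ideal since `V` is local) has transcendence degree
`d - 1` over (the isomorphic image of) the residue field of `D`, where `d = dim D`. -/
noncomputable def IsHiddenPrimeDivisor {D : Type*} [CommRing D] (φ : D →+* K) (V : Subring K)
    (hV : ∀ r, φ r ∈ V) : Prop :=
  IsDiscreteValuationRing V ∧
  (∀ r : D, ¬ IsUnit r → ¬ IsUnit (φ.codRestrict V hV r)) ∧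
  (∃ d : ℕ, ringKrullDim D = (d : ℕ) ∧
    ∃ b : Fin (d - 1) → (↥V ⧸ (⊥ : Ideal V).jacobson),
      IsTranscendenceBasis
        (((Ideal.Quotient.mk ((⊥ : Ideal V).jacobson)).comp (φ.codRestrict V hV)).range) b)

lemma phi_mem_locSubring {D : Type*} [CommRing D] (φ : D →+* K) {H : Subring K}
    (hDH : ∀ r, φ r ∈ H) {P : Ideal H} (hP : P.IsPrime) (r : D) :
    φ r ∈ locSubring H P hP :=
  ⟨φ r, hDH r, 1, fun h => hP.ne_top ((Ideal.eq_top_iff_one P).2 h), by simp⟩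

/-- `Q` is an exceptional prime ideal of the extension `H/D`: `Q` is a height one prime of `H`
such that the localization `H_Q` is a hidden prime divisor of `D`. -/
noncomputable def IsExceptionalPrime {D : Type*} [CommRing D] (φ : D →+* K) (H : Subring K)
    (hDH : ∀ r, φ r ∈ H) (Q : Ideal H) : Prop :=
  ∃ hQ : Q.IsPrime, HeightOne Q ∧
    IsHiddenPrimeDivisor φ (locSubring H Q hQ) (phi_mem_locSubring φ hDH hQ)

/-- The extension `H/D` is essentially `n`-fibered: for each prime ideal `P` of `H`, the
extension `H_P/D` has at most `n` exceptional prime ideals. -/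
noncomputable def EssNFibered {D : Type*} [CommRing D] (φ : D →+* K) (H : Subring K)
    (hDH : ∀ r, φ r ∈ H) (n : ℕ) : Prop :=
  ∀ (P : Ideal H) (hP : P.IsPrime),
    {Q : Ideal (locSubring H P hP) |
        IsExceptionalPrime φ (locSubring H P hP) (phi_mem_locSubring φ hDH hP) Q}.Finite ∧
    {Q : Ideal (locSubring H P hP) |
        IsExceptionalPrime φ (locSubring H P hP) (phi_mem_locSubring φ hDH hP) Q}.ncard ≤ n

/-- The overring `D[1/f]` of (the image under `φ` of) `D`, as a subring of the field `K`. -/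
noncomputable def awayS {D : Type*} [CommRing D] (φ : D →+* K) (f : D) : Subring K :=
  Subring.closure (Set.range φ ∪ {(φ f)⁻¹})

lemma phi_mem_awayS {D : Type*} [CommRing D] (φ : D →+* K) (f : D) (r : D) :
    φ r ∈ awayS φ f :=
  Subring.subset_closure (Or.inl ⟨r, rfl⟩)

/-- The localization of `R` at (the image of) the multiplicative set `S ⊆ D₀`, as a subring of
the field `K`; `hR` says that `φ` maps `D₀` into `R`. -/
def subLoc {D₀ : Type*} [CommRing D₀] (φ : D₀ →+* K) (S : Submonoid D₀) (R : Subring K)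
    (hR : ∀ d, φ d ∈ R) : Subring K where
  carrier := {x : K | ∃ r ∈ R, ∃ s ∈ S, x * φ s = r}
  zero_mem' := ⟨0, zero_mem R, 1, S.one_mem, by simp⟩
  one_mem' := ⟨φ 1, hR 1, 1, S.one_mem, by simp⟩
  add_mem' := by
    rintro x y ⟨r₁, hr₁, s₁, hs₁, e₁⟩ ⟨r₂, hr₂, s₂, hs₂, e₂⟩
    refine ⟨r₁ * φ s₂ + r₂ * φ s₁, add_mem (mul_mem hr₁ (hR s₂)) (mul_mem hr₂ (hR s₁)),
      s₁ * s₂, S.mul_mem hs₁ hs₂, ?_⟩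
    rw [map_mul]
    calc (x + y) * (φ s₁ * φ s₂) = (x * φ s₁) * φ s₂ + (y * φ s₂) * φ s₁ := by ring
    _ = r₁ * φ s₂ + r₂ * φ s₁ := by rw [e₁, e₂]
  mul_mem' := by
    rintro x y ⟨r₁, hr₁, s₁, hs₁, e₁⟩ ⟨r₂, hr₂, s₂, hs₂, e₂⟩
    refine ⟨r₁ * r₂, mul_mem hr₁ hr₂, s₁ * s₂, S.mul_mem hs₁ hs₂, ?_⟩
    rw [map_mul]
    calc (x * y) * (φ s₁ * φ s₂) = (x * φ s₁) * (y * φ s₂) := by ring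
    _ = r₁ * r₂ := by rw [e₁, e₂]
  neg_mem' := by
    rintro x ⟨r, hr, s, hs, e⟩
    exact ⟨-r, neg_mem hr, s, hs, by rw [neg_mul, e]⟩



section Aux
variable {K : Type*} [Field K]

lemma valuationRing_of_mem_or_inv_mem (W : Subring K)
    (h : ∀ x : K, x ≠ 0 → x ∈ W ∨ x⁻¹ ∈ W) : ValuationRing ↥W := by
  refine { cond' := ?_ }
  intro a b
  by_cases ha : (a : K) = 0
  · exact ⟨0, Or.inr (by ext; simp [ha])⟩
  by_cases hb : (b : K) = 0
  · exact ⟨0, Or.inl (by ext; simp [hb])⟩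
  rcases h ((a : K) / (b : K)) (div_ne_zero ha hb) with hx | hx
  · refine ⟨⟨_, hx⟩, Or.inr ?_⟩
    ext; push_cast; field_simp
  · rw [inv_div] at hx
    refine ⟨⟨_, hx⟩, Or.inl ?_⟩
    ext; push_cast; field_simp

lemma mem_or_inv_mem_of_valuationRing {D V : Subring K}
    (hquot : ∀ x : K, ∃ a ∈ D, ∃ b ∈ D, b ≠ 0 ∧ x * b = a)
    (hDV : D ≤ V) (hv : ValuationRing ↥V) (x : K) : x ∈ V ∨ x⁻¹ ∈ V := by
  obtain ⟨a, ha, b, hb, hb0, he⟩ := hquot x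
  haveI := hv
  obtain ⟨c, hc⟩ := ValuationRing.cond (⟨a, hDV ha⟩ : ↥V) ⟨b, hDV hb⟩
  have hx : x = a / b := by rw [eq_div_iff hb0]; exact he
  rcases hc with hc | hc
  · right
    have : (a : K) * (c : K) = b := congrArg Subtype.val hc
    by_cases ha0 : a = (0 : K)
    · simp [ha0] at this; exact absurd this.symm hb0
    · have : x⁻¹ = (c : K) := by rw [hx, inv_div]; field_simp [← this]; exact this.symm
      rw [this]; exact c.2
  · left
    have : (b : K) * (c : K) = a := congrArg Subtype.val hc
    have : x = (c : K) := by rw [hx]; field_simp [← this]; exact this.symm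
    rw [this]; exact c.2

lemma intClosure_mono {A B : Subring K} (h : A ≤ B) : intClosure A ≤ intClosure B := by
  rintro x ⟨p, hp, he⟩
  refine ⟨p.map (Subring.inclusion h), hp.map _, ?_⟩
  have hc : (algebraMap ↥B K).comp (Subring.inclusion h) = algebraMap ↥A K := by
    ext y; rfl
  rw [show (Polynomial.eval₂ (algebraMap ↥B K) x (p.map (Subring.inclusion h)) : K)
      = Polynomial.eval₂ ((algebraMap ↥B K).comp (Subring.inclusion h)) x p from
      Polynomial.eval₂_map _ _ _, hc]
  exact he

lemma intClosure_le_self (H : Subring K)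
    (hq : ∀ x : K, ∃ a ∈ H, ∃ b ∈ H, b ≠ 0 ∧ x * b = a)
    (hic : IsIntegrallyClosed ↥H) : intClosure H ≤ H := by
  haveI : IsFractionRing ↥H K := by
    refine { map_units := ?_, surj := ?_, exists_of_eq := ?_ }
    · rintro ⟨y, hy⟩
      have hy0 : (y : K) ≠ 0 := by
        intro h0
        have hz : y = 0 := Subtype.ext h0
        subst hz
        exact nonZeroDivisors.ne_zero hy rfl
      exact isUnit_iff_ne_zero.2 hy0
    · intro z
      obtain ⟨a, ha, b, hb, hb0, he⟩ := hq z
      exact ⟨⟨⟨a, ha⟩, ⟨⟨b, hb⟩,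
        mem_nonZeroDivisors_of_ne_zero (fun h => hb0 (congrArg Subtype.val h))⟩⟩, he⟩
    · intro x y h
      exact ⟨1, by simpa using Subtype.ext (h : (x : K) = y)⟩
  intro x hx
  obtain ⟨y, hy⟩ := IsIntegrallyClosed.isIntegral_iff.mp (hx : IsIntegral ↥H x)
  rw [← hy]; exact y.2

end Aux

/-- Let `D ⊆ H ⊆ R` be domains (subrings of the quotient field `K` of `D`) with
`R` a proper overring of `D` and `H` integrally closed, and let `n` be a positive integer.  If
`H` is a directed union of overrings `A_α` of `D` each of which is an essentially `n`-valuated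
subring of `R`, then `H` is an essentially `n`-valuated subring of `R`. -/
theorem statement1 {K : Type*} [Field K] (D H R : Subring K)
    (hquot : ∀ x : K, ∃ a ∈ D, ∃ b ∈ D, b ≠ 0 ∧ x * b = a)
    (hDH : D ≤ H) (hHR : H ≤ R) (hDR : D ≠ R)
    (hic : IsIntegrallyClosed H)
    (n : ℕ) (hn : 0 < n)
    (ι : Type*) (A : ι → Subring K)
    (hDA : ∀ α, D ≤ A α)
    (hdir : ∀ α β : ι, ∃ γ : ι, A α ≤ A γ ∧ A β ≤ A γ)
    (hunion : (H : Set K) = ⋃ α : ι, ((A α : Subring K) : Set K))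
    (hval : ∀ α, EssNVal (A α) R n) :
    EssNVal H R n := by
  classical
  intro P hP
  have hmemA : ∀ x ∈ H, ∃ α, x ∈ A α := by
    intro x hx
    exact Set.mem_iUnion.mp (hunion ▸ hx)
  have hAH : ∀ α, A α ≤ H := by
    intro α x hx
    exact (show x ∈ (H : Set K) from hunion ▸ Set.mem_iUnion.mpr ⟨α, hx⟩)
  have hGH : intClosure H ≤ H :=
    intClosure_le_self H (fun x => by
      obtain ⟨a, ha, b, hb, h0, he⟩ := hquot x
      exact ⟨a, hDH ha, b, hDH hb, h0, he⟩) hic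
  have hGaG : ∀ α, intClosure (A α) ≤ intClosure H := fun α => intClosure_mono (hAH α)
  set Pa : ∀ α : ι, Ideal ↥(intClosure (A α)) :=
    fun α => P.comap (Subring.inclusion (hGaG α)) with hPadef
  have hPa : ∀ α, (Pa α).IsPrime := fun α => by
    haveI := hP
    exact Ideal.IsPrime.comap _
  choose V hV using fun α => hval α (Pa α) (hPa α)
  -- membership in Pa
  have hPamem : ∀ (α : ι) (t : ↥(intClosure (A α))),
      t ∈ Pa α ↔ (⟨(t : K), hGaG α t.2⟩ : ↥(intClosure H)) ∈ P := by
    intro α t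
    rw [hPadef, Ideal.mem_comap]
    exact Iff.of_eq (congrArg (· ∈ P) (Subtype.ext rfl))
  -- ultrafilter setup
  have hne : Nonempty ι := by
    obtain ⟨α, _⟩ := hmemA 1 (one_mem H)
    exact ⟨α⟩
  obtain ⟨α₀⟩ := hne
  set up : ι → Set ι := fun β => {α | A β ≤ A α} with hupdef
  set F : Filter ι := Filter.generate (Set.range up) with hFdef
  have hupF : ∀ β, up β ∈ F := fun β =>
    Filter.mem_generate_iff.mpr ⟨{up β}, by simp, Set.finite_singleton _, by simp⟩
  have hsub : ∀ t : Set (Set ι), t.Finite → t ⊆ Set.range up → ∃ δ, up δ ⊆ ⋂₀ t := by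
    intro t htfin
    refine Set.Finite.induction_on t htfin (fun _ => ⟨α₀, by simp⟩)
      (fun {a s} _ _ ih hins => ?_)
    obtain ⟨δ, hδ⟩ := ih (fun y hy => hins (Set.mem_insert_of_mem _ hy))
    obtain ⟨β, hβ⟩ := hins (Set.mem_insert a s)
    obtain ⟨γ, hγ1, hγ2⟩ := hdir β δ
    refine ⟨γ, ?_⟩
    intro y hy
    rw [Set.sInter_insert]
    constructor
    · rw [← hβ]; exact hγ1.trans hy
    · exact hδ (hγ2.trans hy)
  have hFne : F.NeBot := by
    rw [Filter.neBot_iff]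
    intro hbot
    have : (∅ : Set ι) ∈ F := by rw [hbot]; exact Filter.mem_bot
    obtain ⟨t, hts, htfin, hti⟩ := Filter.mem_generate_iff.mp this
    obtain ⟨δ, hδ⟩ := hsub t htfin hts
    have hδδ : δ ∈ up δ := by simp only [hupdef]; exact le_refl (A δ)
    exact hti (hδ hδδ)
  set U : Ultrafilter ι := Ultrafilter.of F with hUdef
  have hupU : ∀ β, up β ∈ U := fun β => Ultrafilter.of_le F (hupF β)
  -- the valuation rings
  set W : Fin n → Subring K := fun i =>
    { carrier := {x : K | {α | x ∈ V α i} ∈ U}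
      zero_mem' := Filter.univ_mem' (fun α => show (0:K) ∈ V α i from zero_mem _)
      one_mem' := Filter.univ_mem' (fun α => show (1:K) ∈ V α i from one_mem _)
      add_mem' := fun hx hy => Filter.mem_of_superset (Filter.inter_mem hx hy)
        (fun α hα => show _ + _ ∈ V α i from add_mem hα.1 hα.2)
      mul_mem' := fun hx hy => Filter.mem_of_superset (Filter.inter_mem hx hy)
        (fun α hα => show _ * _ ∈ V α i from mul_mem hα.1 hα.2)
      neg_mem' := fun hx => Filter.mem_of_superset hx (fun α hα => show -_ ∈ V α i from neg_mem hα) } with hWdef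
  have hmemW : ∀ (i : Fin n) (x : K), x ∈ W i ↔ {α | x ∈ V α i} ∈ U := fun _ _ => Iff.rfl
  refine ⟨W, ?_, ?_⟩
  · intro i
    constructor
    · intro x hx
      obtain ⟨β, hβ⟩ := hmemA x hx
      refine (U : Filter ι).mem_of_superset (hupU β) ?_
      intro α hα
      exact ((hV α).1 i).1 (hα hβ)
    · refine valuationRing_of_mem_or_inv_mem _ ?_
      intro x _
      by_cases h : {α | x ∈ V α i} ∈ U
      · exact Or.inl h
      · right
        refine (U : Filter ι).mem_of_superset (Ultrafilter.compl_mem_iff_notMem.mpr h) ?_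
        intro α hα
        rcases mem_or_inv_mem_of_valuationRing hquot ((hDA α).trans ((hV α).1 i).1)
          ((hV α).1 i).2 x with h1 | h1
        · exact absurd h1 hα
        · exact h1
  · apply Set.Subset.antisymm
    · rintro x ⟨r, hr, s, hs, he⟩
      obtain ⟨β₁, hβ₁⟩ := hmemA r (hGH hr)
      obtain ⟨β₂, hβ₂⟩ := hmemA (s : K) (hGH s.2)
      obtain ⟨β, hb1, hb2⟩ := hdir β₁ β₂
      have hkey : ∀ α, A β ≤ A α →
          x ∈ locSet (intClosure (A α)) (Pa α) (intClosure (A α)) := by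
        intro α hβα
        refine ⟨r, mem_intClosure_of_mem (hβα (hb1 hβ₁)),
          ⟨(s : K), mem_intClosure_of_mem (hβα (hb2 hβ₂))⟩, ?_, he⟩
        intro hc
        exact hs (by
          have := (hPamem α _).mp hc
          exact (show s ∈ P from by
            convert this using 1))
      constructor
      · refine Set.mem_iInter.mpr (fun i => ?_)
        refine (U : Filter ι).mem_of_superset (hupU β) (fun α hα => ?_)
        have hxa := hkey α hα
        rw [(hV α).2] at hxa
        exact Set.mem_iInter.mp hxa.1 i
      · exact ⟨r, hHR (hGH hr), s, hs, he⟩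
    · rintro x ⟨hxW, r, hr, s, hs, he⟩
      obtain ⟨β, hβ⟩ := hmemA (s : K) (hGH s.2)
      have hT : (up β ∩ ⋂ i, {α | x ∈ V α i}) ∈ U := by
        refine (U : Filter ι).inter_mem (hupU β) (Filter.iInter_mem.mpr (fun i => ?_))
        exact (hmemW i x).mp (Set.mem_iInter.mp hxW i)
      obtain ⟨α, hα1, hα2⟩ := Ultrafilter.nonempty_of_mem hT
      have hsa : (s : K) ∈ intClosure (A α) := mem_intClosure_of_mem (hα1 hβ)
      have hsPa : (⟨(s : K), hsa⟩ : ↥(intClosure (A α))) ∉ Pa α := by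
        intro hc
        exact hs (by
          have := (hPamem α _).mp hc
          exact (show s ∈ P from by
            convert this using 1))
      have hx1 : x ∈ locSet (intClosure (A α)) (Pa α) (intClosure (A α)) := by
        rw [(hV α).2]
        exact ⟨Set.mem_iInter.mpr (fun i => Set.mem_iInter.mp hα2 i),
          ⟨r, hr, ⟨(s : K), hsa⟩, hsPa, he⟩⟩
      obtain ⟨r', hr', s', hs', he'⟩ := hx1
      refine ⟨r', hGaG α hr', ⟨(s' : K), hGaG α s'.2⟩, ?_, he'⟩
      intro hc
      exact hs' ((hPamem α s').mpr (by
        convert hc using 1))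


end ArticleOT
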